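/- Let A be a commutative ring and B an A-algebra free of rank n with A-basis ε = (ε_1, …, ε_n), with structure constants c_{ij}^{(k)} ∈ A defined by ε_i ε_j = Σ_k c_{ij}^{(k)} ε_k. Let μ: B ⊗_A B → B be the multiplication map and J = ker μ. An element t = u_1 ⊗ ε_1 + ⋯ + u_n ⊗ ε_n of B ⊗_A B (with u_i ∈ B) belongs to Ann(J) if and only if u_i ε_j = Σ_k c_{kj}^{(i)} u_k for all i, j ∈ {1, …, n}. -/

import Mathlib

open TensorProduct

/-- Let `B` be an `A`-algebra free of rank `n` with basis `ε`, with
structure constants `c_{ij}^{(k)} = ε.repr (ε_i * ε_j) k`, so `ε_i ε_j = Σ_k c_{ij}^{(k)} ε_k`.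
Let `μ : B ⊗[A] B → B` be the multiplication map, `J = ker μ`.  An element
`t = Σ_i u_i ⊗ ε_i` of `B ⊗[A] B` belongs to `Ann J` if and only if
`u_i ε_j = Σ_k c_{kj}^{(i)} u_k` for all `i, j`. -/
theorem mem_annihilator_iff_structure_constants
    (A B : Type*) [CommRing A] [CommRing B] [Algebra A B]
    (n : ℕ) (ε : Module.Basis (Fin n) A B) (u : Fin n → B) :
    (∑ i, u i ⊗ₜ[A] ε i) ∈
        (RingHom.ker (Algebra.TensorProduct.lmul' A : B ⊗[A] B →ₐ[A] B)).annihilator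
      ↔ ∀ i j, u i * ε j = ∑ k, ε.repr (ε k * ε j) i • u k := by
  classical
  set t : B ⊗[A] B := ∑ i, u i ⊗ₜ[A] ε i with ht
  have key : ∀ v : Fin n → B, (∑ i, v i ⊗ₜ[A] ε i) = 0 ↔ ∀ i, v i = 0 := by
    intro v
    constructor
    · intro hv i
      have h0 : (∑ i, v i • (ε.baseChange B) i) = 0 := by
        simpa [Module.Basis.baseChange_apply, TensorProduct.smul_tmul', smul_eq_mul] using hv
      exact Fintype.linearIndependent_iff.mp (ε.baseChange B).linearIndependent v h0 i
    · intro hv; simp [hv]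
  have mul_eq : ∀ j, t * ((1 : B) ⊗ₜ[A] ε j - ε j ⊗ₜ[A] (1 : B)) =
      ∑ i, ((∑ k, ε.repr (ε k * ε j) i • u k) - u i * ε j) ⊗ₜ[A] ε i := by
    intro j
    have expand : ∀ i, u i ⊗ₜ[A] (ε i * ε j)
        = ∑ k, (ε.repr (ε i * ε j) k • u i) ⊗ₜ[A] ε k := by
      intro i
      conv_lhs => rw [← Module.Basis.sum_repr ε (ε i * ε j)]
      rw [TensorProduct.tmul_sum]
      simp_rw [← TensorProduct.smul_tmul]
    rw [mul_sub, ht, Finset.sum_mul, Finset.sum_mul]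
    simp_rw [Algebra.TensorProduct.tmul_mul_tmul, mul_one, expand,
      TensorProduct.sub_tmul, TensorProduct.sum_tmul]
    rw [Finset.sum_comm, ← Finset.sum_sub_distrib]
  have tg : ∀ j, (t * ((1 : B) ⊗ₜ[A] ε j - ε j ⊗ₜ[A] (1 : B)) = 0) ↔
      ∀ i, u i * ε j = ∑ k, ε.repr (ε k * ε j) i • u k := by
    intro j
    rw [mul_eq j, key]
    constructor
    · intro h i
      have := h i
      rwa [sub_eq_zero, eq_comm] at this
    · intro h i
      rw [sub_eq_zero]
      exact (h i).symm
  constructor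
  · intro H i j
    have hg : ((1 : B) ⊗ₜ[A] ε j - ε j ⊗ₜ[A] (1 : B))
        ∈ RingHom.ker (Algebra.TensorProduct.lmul' A : B ⊗[A] B →ₐ[A] B) := by
      simp [RingHom.mem_ker, Algebra.TensorProduct.lmul'_apply_tmul]
    have h0 := Submodule.mem_annihilator.mp H _ hg
    rw [smul_eq_mul] at h0
    exact (tg j).mp h0 i
  · intro h
    rw [Submodule.mem_annihilator]
    intro x hx
    rw [smul_eq_mul]
    have htg : ∀ j, t * ((1 : B) ⊗ₜ[A] ε j - ε j ⊗ₜ[A] (1 : B)) = 0 :=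
      fun j => (tg j).mpr (fun i => h i j)
    have hx' : x ∈ Submodule.span B
        (Set.range fun s : B => (1 : B) ⊗ₜ[A] s - s ⊗ₜ[A] (1 : B)) := by
      rw [KaehlerDifferential.submodule_span_range_eq_ideal]
      exact hx
    clear hx
    induction hx' using Submodule.span_induction with
    | mem g hg =>
      obtain ⟨s, rfl⟩ := hg
      show t * ((1 : B) ⊗ₜ[A] s - s ⊗ₜ[A] (1 : B)) = 0
      have hdec : (1 : B) ⊗ₜ[A] s - s ⊗ₜ[A] (1 : B)
          = ∑ j, ε.repr s j • ((1 : B) ⊗ₜ[A] ε j - ε j ⊗ₜ[A] (1 : B)) := by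
        conv_lhs => rw [← Module.Basis.sum_repr ε s]
        rw [TensorProduct.tmul_sum, TensorProduct.sum_tmul, ← Finset.sum_sub_distrib]
        simp [TensorProduct.smul_tmul', TensorProduct.tmul_smul, smul_sub]
      rw [hdec, Finset.mul_sum]
      simp_rw [mul_smul_comm, htg, smul_zero]
      simp
    | zero => simp
    | add y z _ _ hy hz => rw [mul_add, hy, hz, add_zero]
    | smul b y _ hy => rw [mul_smul_comm, hy, smul_zero]
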